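/- In the setting of the optimal-allocation theorem (G finite nonempty, p > 0, c_g > 0, gamma_g > 0 with sum gamma = 1, omega ∈ (0,1), alpha* the unique minimizer of F_omega over the open simplex), the up-sampling vector theta can be chosen so that, in addition to theta_g ≥ omega, sum_g gamma_g theta_g = 1 and alpha*_g ∝ (gamma_g c_g theta_g)^{1/(p+1)}, the set of up-sampled groups {g : theta_g > omega} is downward closed with respect to the normalized representation gamma_g * c_g^{-1/p}: for all g, g' ∈ G, if gamma_g * c_g^{-1/p} < gamma_{g'} * c_{g'}^{-1/p} and theta_{g'} > omega, then theta_g > omega. Thus the subgroups with low representation normalized by learning difficulty are systematically up-sampled in the optimal allocation. -/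

import Mathlib

open Finset Filter Topology

lemma tendsto_finset_sup'' {ι : Type*} {l : Filter ℝ} (s : Finset ι) (hs : s.Nonempty)
    (q : ι → ℝ → ℝ) (L : ι → ℝ) (h : ∀ i ∈ s, Tendsto (q i) l (𝓝 (L i))) :
    Tendsto (fun t => s.sup' hs (fun i => q i t)) l (𝓝 (s.sup' hs L)) := by
  induction hs using Finset.Nonempty.cons_induction with
  | singleton i => simpa using h i (by simp)
  | cons i s hi hs ih =>
      simp only [Finset.sup'_cons hs]
      exact (h i (by simp)).max (ih fun j hj => h j (by simp [hj]))

lemma directional {G : Type*} [Fintype G] [Nonempty G]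
    (p ω : ℝ) (hp : 0 < p) (hω1 : ω < 1)
    (c γ α : G → ℝ)
    (hαpos : ∀ g, 0 < α g) (hαsum : ∑ g, α g = 1)
    (hmin : ∀ b : G → ℝ, (∀ g, 0 < b g) → ∑ g, b g = 1 →
      ω * ∑ g, γ g * (c g * α g ^ (-p))
        + (1 - ω) * univ.sup' univ_nonempty (fun g => c g * α g ^ (-p))
      ≤ ω * ∑ g, γ g * (c g * b g ^ (-p))
        + (1 - ω) * univ.sup' univ_nonempty (fun g => c g * b g ^ (-p)))
    (A : Finset G) (hAne : A.Nonempty)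
    (hAdef : ∀ g, g ∈ A ↔
      c g * α g ^ (-p) = univ.sup' univ_nonempty (fun g => c g * α g ^ (-p)))
    (d : G → ℝ) (hd : ∑ g, d g = 0) :
    0 ≤ ω * ∑ g, γ g * (c g * (-p * α g ^ (-p - 1)) * d g)
      + (1 - ω) * A.sup' hAne (fun g => c g * (-p * α g ^ (-p - 1)) * d g) := by
  set M : ℝ := univ.sup' univ_nonempty (fun g => c g * α g ^ (-p)) with hM
  have hAle : ∀ g, c g * α g ^ (-p) ≤ M := by
    intro g; rw [hM]; exact Finset.le_sup' (fun g => c g * α g ^ (-p)) (mem_univ g)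
  -- coordinate functions
  set m : G → ℝ → ℝ := fun g t => c g * (α g + t * d g) ^ (-p) with hm
  set D : G → ℝ := fun g => c g * (-p * α g ^ (-p - 1)) * d g with hD
  have hm0 : ∀ g, m g 0 = c g * α g ^ (-p) := by intro g; simp [hm]
  have hderiv : ∀ g : G, HasDerivAt (m g) (D g) 0 := by
    intro g
    have h2 : HasDerivAt (fun t : ℝ => α g + t * d g) (d g) 0 := by
      simpa using ((hasDerivAt_id (0:ℝ)).mul_const (d g)).const_add (α g)
    have h1 : HasDerivAt (fun x : ℝ => x ^ (-p)) (-p * α g ^ (-p - 1))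
        ((fun t : ℝ => α g + t * d g) 0) := by
      simpa using Real.hasDerivAt_rpow_const (p := -p) (Or.inl (hαpos g).ne')
    have h3 := (h1.comp 0 h2).const_mul (c g)
    simpa [hm, hD, Function.comp, mul_assoc] using h3
  have hslope : ∀ g : G, Tendsto (fun t => (m g t - m g 0) / t) (𝓝[>] (0:ℝ)) (𝓝 (D g)) := by
    intro g
    have := (hasDerivAt_iff_tendsto_slope.1 (hderiv g)).mono_left
      (nhdsWithin_mono _ (fun x hx => ne_of_gt hx))
    refine this.congr fun t => ?_
    simp [slope_def_field]
  have hcontm : ∀ g, Tendsto (m g) (𝓝[>] (0:ℝ)) (𝓝 (m g 0)) :=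
    fun g => ((hderiv g).continuousAt.tendsto).mono_left nhdsWithin_le_nhds
  -- sup over A at 0 equals M
  have hsupA0 : A.sup' hAne (fun g => m g 0) = M := by
    obtain ⟨g₀, hg₀⟩ := hAne
    refine le_antisymm (Finset.sup'_le _ _ fun g hg => (hm0 g) ▸ hAle g) ?_
    have := Finset.le_sup' (fun g => m g 0) hg₀
    rwa [hm0, (hAdef g₀).1 hg₀] at this
  have hsupcont : Tendsto (fun t => A.sup' hAne (fun g => m g t)) (𝓝[>] (0:ℝ)) (𝓝 M) := by
    have := tendsto_finset_sup'' A hAne m (fun g => m g 0) (fun g _ => hcontm g)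
    rwa [hsupA0] at this
  -- eventually the sup over univ equals the sup over A
  have hsupeq : ∀ᶠ t in 𝓝[>] (0:ℝ),
      univ.sup' univ_nonempty (fun g => m g t) = A.sup' hAne (fun g => m g t) := by
    have hlt : ∀ᶠ t in 𝓝[>] (0:ℝ), ∀ g, g ∉ A → m g t < A.sup' hAne (fun g => m g t) := by
      rw [Filter.eventually_all]
      intro g
      by_cases hg : g ∈ A
      · filter_upwards with t h; exact absurd hg h
      · have hlt0 : m g 0 < M := lt_of_le_of_ne ((hm0 g) ▸ hAle g)
          (by rw [hm0]; exact fun h => hg ((hAdef g).2 h))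
        filter_upwards [(hcontm g).eventually_lt hsupcont hlt0] with t ht _
        exact ht
    filter_upwards [hlt] with t ht
    refine le_antisymm (Finset.sup'_le _ _ fun g _ => ?_)
      (Finset.sup'_le _ _ fun g hg => Finset.le_sup' (fun g => m g t) (mem_univ g))
    by_cases hg : g ∈ A
    · exact Finset.le_sup' (fun g => m g t) hg
    · exact (ht g hg).le
  -- eventually feasibility and minimality
  have hpos : ∀ᶠ t in 𝓝[>] (0:ℝ), ∀ g, 0 < α g + t * d g := by
    rw [Filter.eventually_all]
    intro g
    have hcont : Tendsto (fun t : ℝ => α g + t * d g) (𝓝[>] 0) (𝓝 (α g)) := by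
      have : Continuous (fun t : ℝ => α g + t * d g) := by continuity
      simpa using (this.tendsto 0).mono_left nhdsWithin_le_nhds
    exact hcont.eventually (eventually_gt_nhds (hαpos g))
  set Ssum : ℝ → ℝ := fun t => ∑ g, γ g * m g t with hSsum
  set Mx : ℝ → ℝ := fun t => A.sup' hAne (fun g => m g t) with hMx
  have hmono : ∀ᶠ t in 𝓝[>] (0:ℝ),
      ω * Ssum 0 + (1 - ω) * M ≤ ω * Ssum t + (1 - ω) * Mx t := by
    filter_upwards [hpos, hsupeq] with t htpos htsup
    have hsum1 : ∑ g, (α g + t * d g) = 1 := by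
      rw [Finset.sum_add_distrib, hαsum, ← Finset.mul_sum, hd, mul_zero, add_zero]
    have := hmin (fun g => α g + t * d g) htpos hsum1
    simp only [hSsum, hMx, hm, hm0]
    rw [← htsup]
    simpa [hm, hM, hm0] using this
  have hquot : ∀ᶠ t in 𝓝[>] (0:ℝ),
      0 ≤ ((ω * Ssum t + (1 - ω) * Mx t) - (ω * Ssum 0 + (1 - ω) * M)) / t := by
    filter_upwards [hmono, self_mem_nhdsWithin] with t ht htpos
    exact div_nonneg (sub_nonneg.2 ht) (le_of_lt htpos)
  -- limit of the quotient
  have hsumlim : Tendsto (fun t => (Ssum t - Ssum 0) / t) (𝓝[>] (0:ℝ))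
      (𝓝 (∑ g, γ g * D g)) := by
    have hS' : HasDerivAt Ssum (∑ g, γ g * D g) 0 :=
      HasDerivAt.fun_sum fun g _ => (hderiv g).const_mul (γ g)
    have := (hasDerivAt_iff_tendsto_slope.1 hS').mono_left
      (nhdsWithin_mono _ (fun x hx => ne_of_gt hx))
    refine this.congr fun t => ?_
    simp [slope_def_field]
  have hmaxlim : Tendsto (fun t => (Mx t - M) / t) (𝓝[>] (0:ℝ))
      (𝓝 (A.sup' hAne D)) := by
    have hkey : ∀ t ∈ Set.Ioi (0:ℝ),
        (Mx t - M) / t = A.sup' hAne (fun g => (m g t - M) / t) := by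
      intro t ht
      have hmono' : Monotone (fun x : ℝ => (x - M) / t) := fun x y h =>
        div_le_div_of_nonneg_right (sub_le_sub_right h M) (Set.mem_Ioi.mp ht).le
      have := Finset.comp_sup'_eq_sup'_comp hAne (f := fun g => m g t)
        (fun x : ℝ => (x - M) / t) (fun x y => hmono'.map_max)
      simpa [hMx, Function.comp] using this
    have hev : ∀ᶠ t in 𝓝[>] (0:ℝ),
        A.sup' hAne (fun g => (m g t - M) / t) = (Mx t - M) / t := by
      filter_upwards [self_mem_nhdsWithin] with t ht
      exact (hkey t ht).symm
    have hlim : Tendsto (fun t => A.sup' hAne (fun g => (m g t - M) / t)) (𝓝[>] (0:ℝ))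
        (𝓝 (A.sup' hAne D)) := by
      refine tendsto_finset_sup'' A hAne _ D (fun g hg => ?_)
      have : m g 0 = M := by rw [hm0]; exact (hAdef g).1 hg
      simpa [this] using hslope g
    exact hlim.congr' hev
  -- combine
  have hcomb : Tendsto (fun t => ((ω * Ssum t + (1 - ω) * Mx t)
      - (ω * Ssum 0 + (1 - ω) * M)) / t) (𝓝[>] (0:ℝ))
      (𝓝 (ω * ∑ g, γ g * D g + (1 - ω) * A.sup' hAne D)) := by
    have := (hsumlim.const_mul ω).add (hmaxlim.const_mul (1 - ω))
    refine this.congr fun t => ?_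
    ring
  exact ge_of_tendsto hcomb hquot


/-- The up-sampling vector `θ` for the unique minimizer of the accuracy–fairness frontier
objective can be chosen so that the set of up-sampled groups `{g : θ g > ω}` is downward
closed with respect to the normalized representation `γ g * (c g) ^ (-1/p)`: groups with
low representation normalized by learning difficulty are systematically up-sampled. -/
theorem optimal_allocation_upsampled_groups_downward_closed
    {G : Type*} [Fintype G] [Nonempty G]
    (p ω : ℝ) (hp : 0 < p) (hω : ω ∈ Set.Ioo (0 : ℝ) 1)
    (c γ : G → ℝ) (hc : ∀ g, 0 < c g) (hγ : ∀ g, 0 < γ g) (hγsum : ∑ g, γ g = 1)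
    (S : Set (G → ℝ)) (hS : S = {α : G → ℝ | (∀ g, 0 < α g) ∧ ∑ g, α g = 1})
    (F : (G → ℝ) → ℝ)
    (hF : ∀ α, F α = ω * ∑ g, γ g * c g * α g ^ (-p)
        + (1 - ω) * Finset.univ.sup' Finset.univ_nonempty (fun g => c g * α g ^ (-p)))
    (α : G → ℝ) (hα : α ∈ S) (hmin : ∀ b ∈ S, F α ≤ F b) :
    ∃ θ : G → ℝ,
      (∀ g, ω ≤ θ g) ∧
      (∑ g, γ g * θ g = 1) ∧
      (∀ g, α g = (γ g * c g * θ g) ^ (1 / (p + 1)) /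
          ∑ g', (γ g' * c g' * θ g') ^ (1 / (p + 1))) ∧
      (∀ g g' : G, γ g * c g ^ (-(1 / p)) < γ g' * c g' ^ (-(1 / p)) →
        ω < θ g' → ω < θ g) := by
  classical
  obtain ⟨hω0, hω1⟩ := hω
  rw [hS] at hα
  obtain ⟨hαpos, hαsum⟩ := hα
  have hmin' : ∀ b : G → ℝ, (∀ g, 0 < b g) → ∑ g, b g = 1 →
      ω * ∑ g, γ g * (c g * α g ^ (-p))
        + (1 - ω) * univ.sup' univ_nonempty (fun g => c g * α g ^ (-p))
      ≤ ω * ∑ g, γ g * (c g * b g ^ (-p))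
        + (1 - ω) * univ.sup' univ_nonempty (fun g => c g * b g ^ (-p)) := by
    intro b hb1 hb2
    have := hmin b (by rw [hS]; exact ⟨hb1, hb2⟩)
    rw [hF α, hF b] at this
    simpa [mul_assoc] using this
  set M : ℝ := univ.sup' univ_nonempty (fun g => c g * α g ^ (-p)) with hM
  set A : Finset G := univ.filter (fun g => c g * α g ^ (-p) = M) with hA
  have hAdef : ∀ g, g ∈ A ↔ c g * α g ^ (-p) = M := by
    intro g; simp [hA]
  have hAne : A.Nonempty := by
    obtain ⟨g₀, -, hg₀⟩ := Finset.exists_mem_eq_sup' univ_nonempty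
      (fun g => c g * α g ^ (-p))
    exact ⟨g₀, (hAdef g₀).2 hg₀.symm⟩
  have hαrpos : ∀ (g : G) (q : ℝ), 0 < α g ^ q := fun g q => Real.rpow_pos_of_pos (hαpos g) q
  set β : G → ℝ := fun g => p * c g * α g ^ (-p - 1) with hβ
  have hβpos : ∀ g, 0 < β g := fun g => by
    simp only [hβ]; exact mul_pos (mul_pos hp (hc g)) (hαrpos g _)
  have hdir : ∀ d : G → ℝ, ∑ g, d g = 0 →
      0 ≤ -(ω * ∑ g, γ g * β g * d g)
        + (1 - ω) * A.sup' hAne (fun g => -(β g * d g)) := by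
    intro d hd
    have hkey := directional p ω hp hω1 c γ α hαpos hαsum hmin' A hAne hAdef d hd
    have e1 : ∀ g : G, γ g * (c g * (-p * α g ^ (-p - 1)) * d g) = -(γ g * β g * d g) :=
      fun g => by simp only [hβ]; ring
    have e2 : ∀ g ∈ A, c g * (-p * α g ^ (-p - 1)) * d g = -(β g * d g) :=
      fun g _ => by simp only [hβ]; ring
    rw [Finset.sum_congr rfl (fun g _ => e1 g), Finset.sup'_congr hAne rfl e2,
      Finset.sum_neg_distrib] at hkey
    linarith [hkey]
  set Γ : ℝ := ∑ g ∈ A, γ g with hΓ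
  set B : ℝ := ∑ g ∈ A, (β g)⁻¹ with hB
  have hBpos : 0 < B := Finset.sum_pos (fun g _ => inv_pos.2 (hβpos g)) hAne
  have hΓpos : 0 < Γ := Finset.sum_pos (fun g _ => hγ g) hAne
  set μ : ℝ := (1 - ω + ω * Γ) / B with hμ
  have hμpos : 0 < μ := div_pos (by nlinarith [mul_pos hω0 hΓpos]) hBpos
  have hμB : μ * B = 1 - ω + ω * Γ := by
    rw [hμ]; field_simp
  -- (K2): for h ∉ A, ω * (γ h * β h) = μ
  have hK2 : ∀ h ∉ A, ω * (γ h * β h) = μ := by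
    intro h hh
    have main : ∀ s : ℝ, s = 1 ∨ s = -1 →
        0 ≤ -(ω * (s * (Γ - γ h * β h * B))) + (1 - ω) * (-s) := by
      intro s hs
      set d : G → ℝ := fun k =>
        s * ((if k ∈ A then (β k)⁻¹ else 0) - (if k = h then B else 0)) with hdd
      have hd0 : ∑ g, d g = 0 := by
        simp only [hdd, ← Finset.mul_sum, Finset.sum_sub_distrib]
        rw [Finset.sum_ite_mem, Finset.univ_inter, Finset.sum_ite_eq' univ h (fun _ => B)]
        simp [hB]
      have hterm : ∀ g : G, γ g * β g * d g =
          s * ((if g ∈ A then γ g * β g * (β g)⁻¹ else 0)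
            - (if g = h then γ g * β g * B else 0)) := by
        intro g
        rcases eq_or_ne g h with h2 | h2
        · subst h2; simp [hdd, hh]; ring
        · by_cases h1 : g ∈ A <;> simp [hdd, h1, h2] <;> ring
      have hsum : ∑ g, γ g * β g * d g = s * (Γ - γ h * β h * B) := by
        rw [Finset.sum_congr rfl (fun g _ => hterm g), ← Finset.mul_sum,
          Finset.sum_sub_distrib, Finset.sum_ite_mem, Finset.univ_inter,
          Finset.sum_ite_eq' univ h (fun g => γ g * β g * B)]
        congr 2
        · exact Finset.sum_congr rfl (fun g hg => by
            rw [mul_assoc, mul_inv_cancel₀ (hβpos g).ne', mul_one])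
        · simp
      have hsupterm : ∀ g ∈ A, -(β g * d g) = -s := by
        intro g hg
        have hgh : g ≠ h := fun e => hh (e ▸ hg)
        have hb := (hβpos g).ne'
        simp only [hdd, hg, if_pos, hgh, if_neg, if_false, sub_zero, if_true]
        field_simp
      have hsup : A.sup' hAne (fun g => -(β g * d g)) = -s := by
        rw [Finset.sup'_congr hAne rfl hsupterm]
        exact Finset.sup'_const hAne (-s)
      have := hdir d hd0
      rw [hsum, hsup] at this
      exact this
    have h1 := main 1 (Or.inl rfl)
    have h2 := main (-1) (Or.inr rfl)
    have hge : ω * (γ h * β h) * B ≥ 1 - ω + ω * Γ := by nlinarith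
    have hle : ω * (γ h * β h) * B ≤ 1 - ω + ω * Γ := by nlinarith
    have : ω * (γ h * β h) * B = μ * B := by rw [hμB]; linarith
    exact mul_right_cancel₀ (ne_of_gt hBpos) this
  -- (K1): for g ∈ A, ω * (γ g * β g) ≤ μ
  have hK1 : ∀ g ∈ A, ω * (γ g * β g) ≤ μ := by
    intro g₀ hg₀
    rcases Finset.eq_empty_or_nonempty (A.erase g₀) with he | hne
    · -- A = {g₀}
      have hAeq : A = {g₀} := by
        rcases (Finset.erase_eq_empty_iff A g₀).1 he with h | h
        · exact absurd h (Finset.nonempty_iff_ne_empty.1 hAne)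
        · exact h
      have hBeq : B = (β g₀)⁻¹ := by rw [hB, hAeq, Finset.sum_singleton]
      have hΓeq : Γ = γ g₀ := by rw [hΓ, hAeq, Finset.sum_singleton]
      have : μ = (1 - ω + ω * γ g₀) * β g₀ := by
        rw [hμ, hBeq, hΓeq, div_inv_eq_mul]
      rw [this]
      have h1 : ω * (γ g₀ * β g₀) = (ω * γ g₀) * β g₀ := by ring
      rw [h1]
      apply mul_le_mul_of_nonneg_right _ (hβpos g₀).le
      linarith
    · -- general case
      set B' : ℝ := ∑ k ∈ A.erase g₀, (β k)⁻¹ with hB'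
      have hB'pos : 0 < B' := Finset.sum_pos (fun k _ => inv_pos.2 (hβpos k)) hne
      set d : G → ℝ := fun k =>
        (if k = g₀ then B' else 0) - (if k ∈ A.erase g₀ then (β k)⁻¹ else 0) with hdd
      have hd0 : ∑ g, d g = 0 := by
        simp only [hdd, Finset.sum_sub_distrib]
        rw [Finset.sum_ite_eq' univ g₀ (fun _ => B'), Finset.sum_ite_mem, Finset.univ_inter]
        simp [hB']
      have hterm : ∀ g : G, γ g * β g * d g =
          (if g = g₀ then γ g * β g * B' else 0)
            - (if g ∈ A.erase g₀ then γ g * β g * (β g)⁻¹ else 0) := by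
        intro g
        rcases eq_or_ne g g₀ with h2 | h2
        · subst h2; simp [hdd]
        · simp only [hdd, h2, if_neg, if_false]
          by_cases h1 : g ∈ A.erase g₀ <;> simp [h1, h2] <;> ring
      have hsum : ∑ g, γ g * β g * d g = γ g₀ * β g₀ * B' - (Γ - γ g₀) := by
        rw [Finset.sum_congr rfl (fun g _ => hterm g), Finset.sum_sub_distrib,
          Finset.sum_ite_eq' univ g₀ (fun g => γ g * β g * B'), Finset.sum_ite_mem,
          Finset.univ_inter]
        have e3 : ∑ k ∈ A.erase g₀, γ k * β k * (β k)⁻¹ = ∑ k ∈ A.erase g₀, γ k :=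
          Finset.sum_congr rfl (fun k _ => by
            rw [mul_assoc, mul_inv_cancel₀ (hβpos k).ne', mul_one])
        rw [e3, Finset.sum_erase_eq_sub hg₀, ← hΓ]
        simp
      have hsup : A.sup' hAne (fun g => -(β g * d g)) = 1 := by
        have hins : A = insert g₀ (A.erase g₀) := (Finset.insert_erase hg₀).symm
        have hval : ∀ g ∈ A.erase g₀, -(β g * d g) = 1 := by
          intro g hg
          have h2 : g ≠ g₀ := Finset.ne_of_mem_erase hg
          have hb := (hβpos g).ne'
          simp only [hdd, h2, if_neg, if_false, hg, if_pos, if_true, zero_sub]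
          field_simp
        have hg₀val : -(β g₀ * d g₀) = -(β g₀ * B') := by
          simp [hdd, Finset.notMem_erase]
        have hnb : -(β g₀ * B') ≤ 1 :=
          le_trans (neg_nonpos.2 (mul_pos (hβpos g₀) hB'pos).le) zero_le_one
        refine le_antisymm (Finset.sup'_le _ _ fun g hg => ?_) ?_
        · rcases eq_or_ne g g₀ with h2 | h2
          · subst h2; rw [hg₀val]; exact hnb
          · exact (hval g (Finset.mem_erase.2 ⟨h2, hg⟩)).le
        · obtain ⟨g1, hg1⟩ := hne
          have := Finset.le_sup' (fun g => -(β g * d g)) (Finset.mem_of_mem_erase hg1)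
          rwa [hval g1 hg1] at this
      have hineq := hdir d hd0
      rw [hsum, hsup] at hineq
      have h4 : ω * (γ g₀ * β g₀) * B ≤ ω * Γ + (1 - ω) := by
        have hBsplit : B = (β g₀)⁻¹ + B' := by
          rw [hB, hB', ← Finset.sum_erase_add A _ hg₀]; ring
        have h5 : ω * (γ g₀ * β g₀ * B') ≤ ω * (Γ - γ g₀) + (1 - ω) := by linarith
        have h6 : γ g₀ * β g₀ * (β g₀)⁻¹ = γ g₀ := by
          rw [mul_assoc, mul_inv_cancel₀ (hβpos g₀).ne', mul_one]
        calc ω * (γ g₀ * β g₀) * B = ω * (γ g₀ * β g₀ * B') + ω * (γ g₀ * β g₀ * (β g₀)⁻¹) := by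
              rw [hBsplit]; ring
          _ ≤ ω * (Γ - γ g₀) + (1 - ω) + ω * γ g₀ := by rw [h6]; linarith
          _ = ω * Γ + (1 - ω) := by ring
      have := hμB
      nlinarith [hBpos]
  -- construct θ
  have h1ω : (0:ℝ) < 1 - ω := by linarith
  set Λ : G → ℝ := fun g => if g ∈ A then (μ - ω * (γ g * β g)) / ((1 - ω) * β g) else 0
    with hΛ
  set θ : G → ℝ := fun g => ω + (1 - ω) * Λ g / γ g with hθ
  have hΛnonneg : ∀ g, 0 ≤ Λ g := by
    intro g
    rw [hΛ]
    by_cases hg : g ∈ A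
    · simp only [hg, if_pos, if_true]
      exact div_nonneg (by linarith [hK1 g hg]) (mul_pos h1ω (hβpos g)).le
    · simp [hg]
  have hθge : ∀ g, ω ≤ θ g := by
    intro g
    rw [hθ]
    have : 0 ≤ (1 - ω) * Λ g / γ g :=
      div_nonneg (mul_nonneg h1ω.le (hΛnonneg g)) (hγ g).le
    linarith
  have hγθ : ∀ g, γ g * θ g = ω * γ g + (1 - ω) * Λ g := by
    intro g
    simp only [hθ]
    rw [mul_comm (γ g), add_mul, div_mul_cancel₀ _ (hγ g).ne']
  have hθβ : ∀ g, γ g * θ g * β g = μ := by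
    intro g
    rw [hγθ g]
    by_cases hg : g ∈ A
    · rw [hΛ]
      simp only [hg, if_pos, if_true]
      have hb := (hβpos g).ne'
      have h1 := h1ω.ne'
      field_simp
      ring
    · rw [hΛ]
      simp only [hg, if_neg, if_false, mul_zero, add_zero]
      have := hK2 g hg
      rw [← this]
      ring
  have hΛsum : ∑ g, Λ g = 1 := by
    have e1 : ∀ g ∈ A, (μ - ω * (γ g * β g)) / ((1 - ω) * β g)
        = μ / (1 - ω) * (β g)⁻¹ - ω / (1 - ω) * γ g := by
      intro g hg
      have hb := (hβpos g).ne'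
      have h1 := h1ω.ne'
      field_simp
    rw [hΛ]
    rw [Finset.sum_ite_mem, Finset.univ_inter, Finset.sum_congr rfl e1,
      Finset.sum_sub_distrib, ← Finset.mul_sum, ← Finset.mul_sum, ← hB, ← hΓ]
    have h1 := h1ω.ne'
    have := hμB
    field_simp
    linarith
  have hγθsum : ∑ g, γ g * θ g = 1 := by
    rw [Finset.sum_congr rfl (fun g _ => hγθ g), Finset.sum_add_distrib,
      ← Finset.mul_sum, ← Finset.mul_sum, hγsum, hΛsum]
    ring
  -- proportionality
  have hp1 : (0:ℝ) < p + 1 := by linarith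
  have hpne := hp.ne'
  have hγcθ : ∀ g, γ g * c g * θ g = (μ / p) * α g ^ (p + 1) := by
    intro g
    have h1 := hθβ g
    have h2 : c g / β g = α g ^ (p + 1) / p := by
      simp only [hβ]
      have hinv : α g ^ (-p - 1) = (α g ^ (p + 1))⁻¹ := by
        rw [← Real.rpow_neg (hαpos g).le]
        congr 1
        ring
      rw [hinv]
      have hca := (hαrpos g (p + 1)).ne'
      have hcc := (hc g).ne'
      field_simp
    have hb := (hβpos g).ne'
    calc γ g * c g * θ g = (γ g * θ g * β g) * (c g / β g) := by
          field_simp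
      _ = μ * (α g ^ (p + 1) / p) := by rw [h1, h2]
      _ = (μ / p) * α g ^ (p + 1) := by ring
  have hμp : 0 < μ / p := div_pos hμpos hp
  have hrpow : ∀ g, (γ g * c g * θ g) ^ (1 / (p + 1)) = (μ / p) ^ (1 / (p + 1)) * α g := by
    intro g
    rw [hγcθ g, Real.mul_rpow hμp.le (hαrpos g _).le]
    congr 1
    rw [← Real.rpow_mul (hαpos g).le, mul_one_div, div_self hp1.ne', Real.rpow_one]
  have hsum' : ∑ g', (γ g' * c g' * θ g') ^ (1 / (p + 1)) = (μ / p) ^ (1 / (p + 1)) := by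
    rw [Finset.sum_congr rfl (fun g _ => hrpow g), ← Finset.mul_sum, hαsum, mul_one]
  refine ⟨θ, hθge, hγθsum, fun g => ?_, fun g g' hlt hθg' => ?_⟩
  · rw [hrpow g, hsum']
    exact (mul_div_cancel_left₀ _ (Real.rpow_pos_of_pos hμp _).ne').symm
  · -- downward closedness
    by_contra hng
    have hθg : θ g = ω := le_antisymm (not_lt.1 hng) (hθge g)
    have hg'A : g' ∈ A := by
      by_contra hn
      have hz : Λ g' = 0 := by simp only [hΛ]; simp [hn]
      have : θ g' = ω := by simp only [hθ, hz]; ring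
      rw [this] at hθg'
      exact lt_irrefl ω hθg'
    have hmug : ω * (γ g * β g) = μ := by
      have h1 := hθβ g
      rw [hθg] at h1
      rw [← h1]; ring
    have hmug' : ω * (γ g' * β g') < μ := by
      have h1 := hθβ g'
      have h2 : ω * (γ g' * β g') < θ g' * (γ g' * β g') :=
        mul_lt_mul_of_pos_right hθg' (mul_pos (hγ g') (hβpos g'))
      calc ω * (γ g' * β g') < θ g' * (γ g' * β g') := h2
        _ = γ g' * θ g' * β g' := by ring
        _ = μ := h1
    have hle : ∀ k, c k * α k ^ (-p) ≤ M := fun k => by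
      rw [hM]; exact Finset.le_sup' (fun g => c g * α g ^ (-p)) (mem_univ k)
    have hMpos : 0 < M :=
      lt_of_lt_of_le (mul_pos (hc g) (hαrpos g (-p))) (hle g)
    set q : ℝ := (p + 1) / p with hq
    have hqpos : 0 < q := div_pos hp1 hp
    have hcore : ∀ k, c k * α k ^ (-p - 1) ≤ M ^ q * c k ^ (-(1 / p)) := by
      intro k
      have h1 : α k ^ (-p) ≤ M / c k := by
        rw [le_div_iff₀ (hc k)]
        calc α k ^ (-p) * c k = c k * α k ^ (-p) := by ring
          _ ≤ M := hle k
      have h2 : (α k ^ (-p)) ^ q ≤ (M / c k) ^ q :=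
        Real.rpow_le_rpow (hαrpos k (-p)).le h1 hqpos.le
      have h3 : (α k ^ (-p)) ^ q = α k ^ (-p - 1) := by
        rw [← Real.rpow_mul (hαpos k).le]
        rw [hq]
        congr 1
        field_simp
        ring
      have h4 : (M / c k) ^ q = M ^ q / c k ^ q := Real.div_rpow hMpos.le (hc k).le q
      have h5 : c k * (M ^ q / c k ^ q) = M ^ q * c k ^ (-(1 / p)) := by
        have e1 : c k ^ (-(1 / p)) = c k ^ (1 - q) := by
          rw [hq]
          congr 1
          field_simp
          ring
        rw [e1, Real.rpow_sub (hc k), Real.rpow_one]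
        ring
      calc c k * α k ^ (-p - 1) = c k * (α k ^ (-p)) ^ q := by rw [h3]
        _ ≤ c k * (M / c k) ^ q := by
            exact mul_le_mul_of_nonneg_left h2 (hc k).le
        _ = M ^ q * c k ^ (-(1 / p)) := by rw [h4, h5]
    have hcore' : c g' * α g' ^ (-p - 1) = M ^ q * c g' ^ (-(1 / p)) := by
      have hmem : c g' * α g' ^ (-p) = M := (hAdef g').1 hg'A
      have h1 : α g' ^ (-p) = M / c g' := by
        rw [eq_div_iff (hc g').ne']
        calc α g' ^ (-p) * c g' = c g' * α g' ^ (-p) := by ring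
          _ = M := hmem
      have h3 : (α g' ^ (-p)) ^ q = α g' ^ (-p - 1) := by
        rw [← Real.rpow_mul (hαpos g').le]
        rw [hq]
        congr 1
        field_simp
        ring
      have h4 : (M / c g') ^ q = M ^ q / c g' ^ q := Real.div_rpow hMpos.le (hc g').le q
      have h5 : c g' * (M ^ q / c g' ^ q) = M ^ q * c g' ^ (-(1 / p)) := by
        have e1 : c g' ^ (-(1 / p)) = c g' ^ (1 - q) := by
          rw [hq]
          congr 1
          field_simp
          ring
        rw [e1, Real.rpow_sub (hc g'), Real.rpow_one]
        ring
      calc c g' * α g' ^ (-p - 1) = c g' * (α g' ^ (-p)) ^ q := by rw [h3]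
        _ = c g' * ((M / c g') ^ q) := by rw [h1]
        _ = M ^ q * c g' ^ (-(1 / p)) := by rw [h4, h5]
    -- conclude
    have hβg : γ g * β g ≤ p * M ^ q * (γ g * c g ^ (-(1 / p))) := by
      simp only [hβ]
      have := mul_le_mul_of_nonneg_left (hcore g) (mul_nonneg hp.le (hγ g).le)
      calc γ g * (p * c g * α g ^ (-p - 1)) = (p * γ g) * (c g * α g ^ (-p - 1)) := by ring
        _ ≤ (p * γ g) * (M ^ q * c g ^ (-(1 / p))) := this
        _ = p * M ^ q * (γ g * c g ^ (-(1 / p))) := by ring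
    have hβg' : γ g' * β g' = p * M ^ q * (γ g' * c g' ^ (-(1 / p))) := by
      simp only [hβ]
      calc γ g' * (p * c g' * α g' ^ (-p - 1)) = (p * γ g') * (c g' * α g' ^ (-p - 1)) := by
            ring
        _ = (p * γ g') * (M ^ q * c g' ^ (-(1 / p))) := by rw [hcore']
        _ = p * M ^ q * (γ g' * c g' ^ (-(1 / p))) := by ring
    have hpMq : 0 < p * M ^ q := mul_pos hp (Real.rpow_pos_of_pos hMpos q)
    have hstrict : γ g * β g < γ g' * β g' := by
      calc γ g * β g ≤ p * M ^ q * (γ g * c g ^ (-(1 / p))) := hβg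
        _ < p * M ^ q * (γ g' * c g' ^ (-(1 / p))) := by
            exact mul_lt_mul_of_pos_left hlt hpMq
        _ = γ g' * β g' := hβg'.symm
    have : μ < μ := by
      calc μ = ω * (γ g * β g) := hmug.symm
        _ < ω * (γ g' * β g') := mul_lt_mul_of_pos_left hstrict hω0
        _ < μ := hmug'
    exact lt_irrefl μ this
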